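/- For partitions alpha and beta of the same size with at most m parts, the Newton polytope of the Schur polynomial s_alpha in m variables is contained in the Newton polytope of s_beta if and only if beta dominates alpha (i.e., the partial sums of beta are at least those of alpha). -/

import Mathlib

open Finset Pointwise

/-- The Young diagram of a partition with at most `m` parts given as an antitone map. -/
def diagramOf {m : ℕ} (lam : Fin m → ℕ) (h : Antitone lam) : YoungDiagram where
  cells := Finset.univ.biUnion fun i : Fin m =>
    (Finset.range (lam i)).image fun j => ((i : ℕ), j)
  isLowerSet := by
    rintro ⟨i₁, j₁⟩ ⟨i₂, j₂⟩ ⟨hi, hj⟩ hm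
    simp only [Finset.coe_biUnion, Finset.coe_univ, Set.mem_iUnion, Finset.mem_coe,
      Finset.mem_image, Finset.mem_range, Set.mem_univ, true_and, Set.iUnion_true] at hm ⊢
    obtain ⟨i, j, hj', hij⟩ := hm
    have hi1 : (i₁ : ℕ) = (i : ℕ) := ((Prod.mk.injEq _ _ _ _).mp hij).1.symm
    have hj1 : j₁ = j := ((Prod.mk.injEq _ _ _ _).mp hij).2.symm
    have hi2m : i₂ < m := lt_of_le_of_lt (le_of_le_of_eq hi hi1) i.isLt
    refine ⟨⟨i₂, hi2m⟩, j₂, ?_, rfl⟩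
    have : lam i ≤ lam ⟨i₂, hi2m⟩ := h (by simpa [Fin.le_def] using le_of_le_of_eq hi hi1)
    omega

/-- The content of a tableau: the number of cells with entry `e`. -/
def content (μ : YoungDiagram) (T : SemistandardYoungTableau μ) (e : ℕ) : ℕ :=
  (μ.cells.filter fun c => T c.1 c.2 = e).card

/-- The coefficient of `x^α` in the Schur polynomial `s_μ(x_1, …, x_m)`: the number of
semistandard Young tableaux of shape `μ` with entries in `{0, …, m-1}` and content `α`. -/
noncomputable def schurCoeff (m : ℕ) (μ : YoungDiagram) (α : Fin m → ℕ) : ℕ :=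
  Nat.card {T : SemistandardYoungTableau μ // (∀ i j : ℕ, (i, j) ∈ μ → T i j < m) ∧
    ∀ k : Fin m, content μ T (k : ℕ) = α k}

/-- The Schur polynomial, viewed as its coefficient function. -/
noncomputable def schurR (m : ℕ) (μ : YoungDiagram) : (Fin m → ℕ) → ℝ :=
  fun α => (schurCoeff m μ α : ℝ)

/-- The support of a polynomial (given by its coefficient function), as a set of points of `ℝ^m`. -/
def Supp {m : ℕ} (F : (Fin m → ℕ) → ℝ) : Set (Fin m → ℝ) :=
  {x | ∃ α : Fin m → ℕ, F α ≠ 0 ∧ x = fun i => (α i : ℝ)}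

/-- The Newton polytope of a polynomial. -/
def NewtonP {m : ℕ} (F : (Fin m → ℕ) → ℝ) : Set (Fin m → ℝ) :=
  convexHull ℝ (Supp F)

/-- A lattice point of `ℝ^m`. -/
def IsLattice {m : ℕ} (x : Fin m → ℝ) : Prop := ∀ i, ∃ z : ℤ, x i = z

/-- Saturated Newton polytope. -/
def HasSNP {m : ℕ} (F : (Fin m → ℕ) → ℝ) : Prop :=
  NewtonP F ∩ {x | IsLattice x} = Supp F

/-- Integer decomposition property of a subset of `ℝ^m`. -/
def HasIDP {m : ℕ} (P : Set (Fin m → ℝ)) : Prop :=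
  ∀ t : ℕ, 0 < t → ∀ p ∈ (t : ℝ) • P, IsLattice p →
    ∃ v : Fin t → (Fin m → ℝ), (∀ j, v j ∈ P ∧ IsLattice (v j)) ∧ p = ∑ j, v j

/-- `b` dominates `a`: every partial sum of `b` is at least that of `a`. -/
def Dominates {m : ℕ} (a b : Fin m → ℕ) : Prop :=
  ∀ j : Fin m, ∑ i ∈ Finset.univ.filter (· ≤ j), a i ≤ ∑ i ∈ Finset.univ.filter (· ≤ j), b i

/-- The `S_m`-orbit of a point of `ℕ^m`, as a subset of `ℝ^m`. -/
def orbitR {m : ℕ} (lam : Fin m → ℕ) : Set (Fin m → ℝ) :=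
  {x | ∃ σ : Equiv.Perm (Fin m), x = fun i => (lam (σ i) : ℝ)}

/-- Add a box to row `r`. -/
def AddBoxAt {m : ℕ} (ν : Fin m → ℕ) (r : Fin m) : Fin m → ℕ :=
  Function.update ν r (ν r + 1)

/-- `ν'` is obtained from `ν` by adding a box in the northmost row such that the result is
a partition that is at most `β`. -/
def NorthmostStep {m : ℕ} (β ν ν' : Fin m → ℕ) : Prop :=
  ∃ r : Fin m, ν' = AddBoxAt ν r ∧ Antitone ν' ∧ ν' ≤ β ∧
    ∀ r' : Fin m, r' < r → ¬ (Antitone (AddBoxAt ν r') ∧ AddBoxAt ν r' ≤ β)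


/-- Existence of a (raw) SSYT of shape `μ` with content `γ`, given dominance. -/
lemma raw_exists (n : ℕ) : ∀ (μ γ : ℕ → ℕ), (∀ i, μ (i+1) ≤ μ i) →
    (∀ i, n ≤ i → μ i = 0) → (∀ k, n ≤ k → γ k = 0) →
    (∀ S : Finset ℕ, ∑ k ∈ S, γ k ≤ ∑ i ∈ Finset.range S.card, μ i) →
    (∑ k ∈ Finset.range n, γ k = ∑ i ∈ Finset.range n, μ i) →
    ∃ T : ℕ → ℕ → ℕ,
      (∀ i j1 j2, j1 ≤ j2 → j2 < μ i → T i j1 ≤ T i j2) ∧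
      (∀ i j, j < μ (i+1) → T i j < T (i+1) j) ∧
      (∀ i j, μ i ≤ j → T i j = 0) ∧
      (∀ i j, j < μ i → T i j < n) ∧
      (∀ k, γ k = ∑ i ∈ Finset.range n,
        ((Finset.range (μ i)).filter (fun j => T i j = k)).card) := by
  induction n with
  | zero =>
    intro μ γ hmono hμfin hγfin hdom hsum
    refine ⟨fun _ _ => 0, ?_, ?_, ?_, ?_, ?_⟩
    · intro i j1 j2 _ hj2; simp [hμfin i (Nat.zero_le _)] at hj2
    · intro i j hj; simp [hμfin (i+1) (Nat.zero_le _)] at hj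
    · intro i j _; rfl
    · intro i j hj; simp [hμfin i (Nat.zero_le _)] at hj
    · intro k; simp [hγfin k (Nat.zero_le _)]
  | succ n IH =>
    intro μ γ hmono hμfin hγfin hdom hsum
    have hAnti : Antitone μ := antitone_nat_of_succ_le hmono
    set R := γ n with hR
    have hRμ0 : R ≤ μ 0 := by
      have h := hdom {n}
      simpa using h
    set μt : ℕ → ℕ := fun i => (μ i - R) + min R (μ (i+1)) with hμt
    have hμtmono : ∀ i, μt (i+1) ≤ μt i := by
      intro i
      have h1 := hmono i; have h2 := hmono (i+1)
      simp only [hμt]; omega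
    have hμt_le : ∀ i, μt i ≤ μ i := by
      intro i; have h1 := hmono i; simp only [hμt]; omega
    have hμt_ge : ∀ i, μ (i+1) ≤ μt i := by
      intro i; have h1 := hmono i; simp only [hμt]; omega
    have htel : ∀ N, ∑ i ∈ Finset.range N, μt i + min R (μ 0)
        = ∑ i ∈ Finset.range N, μ i + min R (μ N) := by
      intro N
      induction N with
      | zero => simp
      | succ N ihN =>
        rw [Finset.sum_range_succ, Finset.sum_range_succ]
        have h1 := hmono N
        simp only [hμt] at ihN ⊢
        omega
    have hμn1 : μ (n+1) = 0 := hμfin _ le_rfl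
    have hsumt : ∑ i ∈ Finset.range (n+1), μt i + R = ∑ i ∈ Finset.range (n+1), μ i := by
      have h := htel (n+1)
      rw [hμn1] at h
      simp only [Nat.min_zero, Nat.add_zero] at h
      omega
    have hμnR : μ n ≤ R := by
      have h1 := hdom (Finset.range n)
      rw [Finset.card_range] at h1
      rw [Finset.sum_range_succ, Finset.sum_range_succ] at hsum
      omega
    have hμtn : μt n = 0 := by simp only [hμt]; rw [hμn1]; omega
    have hμtfin : ∀ i, n ≤ i → μt i = 0 := by
      intro i hi
      rcases Nat.eq_or_lt_of_le hi with h | h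
      · rw [← h]; exact hμtn
      · have h1 : μ i = 0 := hμfin i h
        have h2 : μ (i+1) = 0 := hμfin (i+1) (by omega)
        simp only [hμt]; omega
    set γt : ℕ → ℕ := fun k => if k = n then 0 else γ k with hγt
    have hγtfin : ∀ k, n ≤ k → γt k = 0 := by
      intro k hk
      simp only [hγt]
      rcases Nat.eq_or_lt_of_le hk with h | h
      · simp [← h]
      · rw [if_neg (by omega)]; exact hγfin k (by omega)
    have hsumγt : ∑ k ∈ Finset.range n, γt k = ∑ i ∈ Finset.range n, μt i := by
      have h1 : ∑ k ∈ Finset.range n, γt k = ∑ k ∈ Finset.range n, γ k := by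
        refine Finset.sum_congr rfl fun k hk => ?_
        rw [Finset.mem_range] at hk
        simp only [hγt]; rw [if_neg (by omega)]
      have h2 : ∑ i ∈ Finset.range (n+1), μt i = ∑ i ∈ Finset.range n, μt i := by
        rw [Finset.sum_range_succ, hμtn]
        omega
      rw [Finset.sum_range_succ] at hsum
      omega
    have hdomt : ∀ S : Finset ℕ, ∑ k ∈ S, γt k ≤ ∑ i ∈ Finset.range S.card, μt i := by
      intro S
      set S' := S.filter (· < n) with hS'
      have h1 : ∑ k ∈ S, γt k = ∑ k ∈ S', γ k := by
        rw [hS', Finset.sum_filter]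
        refine Finset.sum_congr rfl fun k _ => ?_
        simp only [hγt]
        by_cases hk : k < n
        · rw [if_pos hk, if_neg (by omega)]
        · rw [if_neg hk]
          by_cases hk2 : k = n
          · simp [hk2]
          · simp [hγfin k (by omega)]
      have hcard : S'.card ≤ S.card := Finset.card_filter_le _ _
      have hmain : ∑ k ∈ S', γ k ≤ ∑ i ∈ Finset.range S'.card, μt i := by
        set j := S'.card with hj
        have hjn : j ≤ n := by
          rw [hj, hS']
          calc (S.filter (· < n)).card ≤ (Finset.range n).card := by
                apply Finset.card_le_card
                intro x hx
                simp only [Finset.mem_filter] at hx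
                simpa using hx.2
            _ = n := Finset.card_range n
        by_cases hc : R ≤ μ j
        · have heq : ∀ i ∈ Finset.range j, μt i = μ i := by
            intro i hi
            rw [Finset.mem_range] at hi
            have h3 : μ j ≤ μ (i+1) := hAnti (by omega)
            have h4 : R ≤ μ (i+1) := le_trans hc h3
            have h5 : R ≤ μ i := le_trans h4 (hmono i)
            simp only [hμt]
            rw [min_eq_left h4]
            omega
          calc ∑ k ∈ S', γ k ≤ ∑ i ∈ Finset.range j, μ i := by
                have := hdom S'; rwa [← hj] at this
            _ = ∑ i ∈ Finset.range j, μt i := (Finset.sum_congr rfl heq).symm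
        · push_neg at hc
          have hflat : ∀ i ∈ Finset.Ico j (n+1), μt i = μ (i+1) := by
            intro i hi
            rw [Finset.mem_Ico] at hi
            have h3 : μ i ≤ μ j := hAnti hi.1
            have h4 : μ (i+1) ≤ R := le_trans (hmono i) (le_trans h3 (le_of_lt hc))
            simp only [hμt]
            rw [min_eq_right h4]
            omega
          have hsplit : ∑ i ∈ Finset.range j, μt i + ∑ i ∈ Finset.Ico j (n+1), μt i
              = ∑ i ∈ Finset.range (n+1), μt i := by
            simp only [Finset.range_eq_Ico]
            exact Finset.sum_Ico_consecutive _ (Nat.zero_le _) (by omega)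
          have hB : ∑ i ∈ Finset.Ico j (n+1), μt i = ∑ i ∈ Finset.Ico (j+1) (n+2), μ i := by
            rw [Finset.sum_congr rfl hflat]
            exact Finset.sum_Ico_add' μ j (n+1) (c := 1)
          have hB2 : ∑ i ∈ Finset.Ico (j+1) (n+2), μ i = ∑ i ∈ Finset.Ico (j+1) (n+1), μ i := by
            rw [Finset.sum_Ico_succ_top (by omega), hμn1, Nat.add_zero]
          have hsplit2 : ∑ i ∈ Finset.range (j+1), μ i + ∑ i ∈ Finset.Ico (j+1) (n+1), μ i
              = ∑ i ∈ Finset.range (n+1), μ i := by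
            simp only [Finset.range_eq_Ico]
            exact Finset.sum_Ico_consecutive _ (Nat.zero_le _) (by omega)
          have hins : R + ∑ k ∈ S', γ k ≤ ∑ i ∈ Finset.range (j+1), μ i := by
            have hnotmem : n ∉ S' := by simp [hS']
            have h4 := hdom (insert n S')
            rw [Finset.card_insert_of_notMem hnotmem, Finset.sum_insert hnotmem, ← hj] at h4
            exact h4
          omega
      calc ∑ k ∈ S, γt k = ∑ k ∈ S', γ k := h1
        _ ≤ ∑ i ∈ Finset.range S'.card, μt i := hmain
        _ ≤ ∑ i ∈ Finset.range S.card, μt i := by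
            apply Finset.sum_le_sum_of_subset
            exact Finset.range_subset_range.mpr hcard
    obtain ⟨Tt, hrow, hcol, hzero, hbound, hcontent⟩ :=
      IH μt γt hμtmono hμtfin hγtfin hdomt hsumγt
    refine ⟨fun i j => if j < μt i then Tt i j else if j < μ i then n else 0,
      ?_, ?_, ?_, ?_, ?_⟩
    · intro i j1 j2 hj12 hj2
      dsimp only
      by_cases h2 : j2 < μt i
      · rw [if_pos h2, if_pos (by omega)]
        exact hrow i j1 j2 hj12 h2
      · rw [if_neg h2, if_pos hj2]
        by_cases h1 : j1 < μt i
        · rw [if_pos h1]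
          exact le_of_lt (hbound i j1 h1)
        · rw [if_neg h1, if_pos (by omega)]
    · intro i j hj
      dsimp only
      have hup : j < μt i := lt_of_lt_of_le hj (hμt_ge i)
      rw [if_pos hup]
      by_cases h2 : j < μt (i+1)
      · rw [if_pos h2]; exact hcol i j h2
      · rw [if_neg h2, if_pos hj]
        exact hbound i j hup
    · intro i j hij
      have h1 := hμt_le i
      dsimp only
      rw [if_neg (by omega), if_neg (by omega)]
    · intro i j hj
      dsimp only
      by_cases h1 : j < μt i
      · rw [if_pos h1]; exact Nat.lt_succ_of_lt (hbound i j h1)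
      · rw [if_neg h1, if_pos hj]; exact Nat.lt_succ_self n
    · intro k
      dsimp only
      by_cases hk : k = n
      · rw [hk]
        have hcnt : ∀ i, ((Finset.range (μ i)).filter
            (fun j => (if j < μt i then Tt i j else if j < μ i then n else 0) = n)).card
            = μ i - μt i := by
          intro i
          have : (Finset.range (μ i)).filter
              (fun j => (if j < μt i then Tt i j else if j < μ i then n else 0) = n)
              = Finset.Ico (μt i) (μ i) := by
            ext j
            simp only [Finset.mem_filter, Finset.mem_range, Finset.mem_Ico]
            constructor
            · rintro ⟨hj, he⟩
              by_cases h1 : j < μt i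
              · rw [if_pos h1] at he
                exact absurd he (Nat.ne_of_lt (hbound i j h1))
              · omega
            · rintro ⟨h1, h2⟩
              rw [if_neg (by omega), if_pos h2]
              exact ⟨h2, rfl⟩
          rw [this, Nat.card_Ico]
        have hsub : ∑ i ∈ Finset.range (n+1), (μ i - μt i)
            = ∑ i ∈ Finset.range (n+1), μ i - ∑ i ∈ Finset.range (n+1), μt i := by
          have : ∑ i ∈ Finset.range (n+1), (μ i - μt i) + ∑ i ∈ Finset.range (n+1), μt i
              = ∑ i ∈ Finset.range (n+1), μ i := by
            rw [← Finset.sum_add_distrib]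
            exact Finset.sum_congr rfl fun i _ => by have := hμt_le i; omega
          omega
        rw [Finset.sum_congr rfl fun i _ => hcnt i, hsub]
        omega
      · have hcnt : ∀ i, ((Finset.range (μ i)).filter
            (fun j => (if j < μt i then Tt i j else if j < μ i then n else 0) = k)).card
            = ((Finset.range (μt i)).filter (fun j => Tt i j = k)).card := by
          intro i
          congr 1
          ext j
          simp only [Finset.mem_filter, Finset.mem_range]
          constructor
          · rintro ⟨hj, he⟩
            by_cases h1 : j < μt i
            · rw [if_pos h1] at he; exact ⟨h1, he⟩
            · rw [if_neg h1, if_pos hj] at he; exact absurd he.symm hk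
          · rintro ⟨hj, he⟩
            exact ⟨lt_of_lt_of_le hj (hμt_le i), by rw [if_pos hj]; exact he⟩
        rw [Finset.sum_congr rfl fun i _ => hcnt i, Finset.sum_range_succ]
        have hrn : ((Finset.range (μt n)).filter (fun j => Tt n j = k)).card = 0 := by
          rw [hμtn]; simp
        rw [hrn, Nat.add_zero]
        have := hcontent k
        simp only [hγt] at this
        rw [if_neg hk] at this
        exact this

section Aux

open Finset

/-- Extension of a `Fin m`-indexed family to `ℕ`, by zero. -/
def extFun {m : ℕ} (lam : Fin m → ℕ) : ℕ → ℕ :=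
  fun i => if h : i < m then lam ⟨i, h⟩ else 0

lemma extFun_lt {m : ℕ} (lam : Fin m → ℕ) {i : ℕ} (h : i < m) :
    extFun lam i = lam ⟨i, h⟩ := dif_pos h

lemma extFun_ge {m : ℕ} (lam : Fin m → ℕ) {i : ℕ} (h : ¬ i < m) :
    extFun lam i = 0 := dif_neg h

lemma extFun_anti {m : ℕ} {lam : Fin m → ℕ} (h : Antitone lam) :
    ∀ a b : ℕ, a ≤ b → extFun lam b ≤ extFun lam a := by
  intro a b hab
  by_cases hb : b < m
  · rw [extFun_lt lam hb, extFun_lt lam (lt_of_le_of_lt hab hb)]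
    exact h (by simpa [Fin.le_def] using hab)
  · rw [extFun_ge lam hb]
    exact Nat.zero_le _

lemma mem_diagramOf {m : ℕ} {lam : Fin m → ℕ} {h : Antitone lam} {i j : ℕ} :
    (i, j) ∈ diagramOf lam h ↔ j < extFun lam i := by
  rw [← YoungDiagram.mem_cells]
  show (i, j) ∈ Finset.univ.biUnion _ ↔ _
  rw [Finset.mem_biUnion]
  constructor
  · rintro ⟨a, -, ha⟩
    rw [Finset.mem_image] at ha
    obtain ⟨b, hb, hab⟩ := ha
    rw [Finset.mem_range] at hb
    obtain ⟨h1, h2⟩ := Prod.mk.injEq _ _ _ _ |>.mp hab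
    rw [← h1, extFun_lt lam a.isLt]
    simpa [← h2] using hb
  · intro hj
    by_cases him : i < m
    · refine ⟨⟨i, him⟩, Finset.mem_univ _, ?_⟩
      rw [Finset.mem_image]
      exact ⟨j, by rwa [Finset.mem_range, ← extFun_lt lam him], rfl⟩
    · rw [extFun_ge lam him] at hj
      omega

/-- Counting cells of `diagramOf` satisfying a predicate, row by row. -/
lemma filter_card_diagramOf {m : ℕ} (lam : Fin m → ℕ) (h : Antitone lam)
    (p : ℕ × ℕ → Prop) [DecidablePred p] :
    (((diagramOf lam h).cells).filter p).card
      = ∑ i ∈ Finset.range m, ((Finset.range (extFun lam i)).filter (fun j => p (i, j))).card := by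
  show ((Finset.univ.biUnion fun i : Fin m =>
    (Finset.range (lam i)).image fun j => ((i : ℕ), j)).filter p).card = _
  rw [Finset.filter_biUnion]
  rw [Finset.card_biUnion]
  · rw [← Fin.sum_univ_eq_sum_range
      (fun i => ((Finset.range (extFun lam i)).filter (fun j => p (i, j))).card) m]
    refine Finset.sum_congr rfl fun i _ => ?_
    rw [Finset.filter_image]
    rw [Finset.card_image_of_injective _ (fun a b hab2 => by simpa using hab2)]
    congr 1
    rw [extFun_lt lam i.isLt]
  · intro a _ b _ hab
    simp only [Finset.disjoint_left]
    intro c hc hc2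
    simp only [Finset.mem_filter, Finset.mem_image] at hc hc2
    obtain ⟨⟨j1, _, hj1⟩, -⟩ := hc
    obtain ⟨⟨j2, _, hj2⟩, -⟩ := hc2
    apply hab
    apply Fin.val_injective
    have e1 := (Prod.mk.injEq _ _ _ _ |>.mp hj1).1
    have e2 := (Prod.mk.injEq _ _ _ _ |>.mp hj2).1
    rw [e1, e2]

lemma content_diagramOf {m : ℕ} (lam : Fin m → ℕ) (h : Antitone lam)
    (T : SemistandardYoungTableau (diagramOf lam h)) (e : ℕ) :
    content (diagramOf lam h) T e
      = ∑ i ∈ Finset.range m, ((Finset.range (extFun lam i)).filter (fun j => T i j = e)).card :=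
  filter_card_diagramOf lam h (fun c => T c.1 c.2 = e)

lemma card_diagramOf {m : ℕ} (lam : Fin m → ℕ) (h : Antitone lam) :
    ((diagramOf lam h).cells).card = ∑ i ∈ Finset.range m, extFun lam i := by
  have := filter_card_diagramOf lam h (fun _ => True)
  simpa using this

end Aux

section Aux2

open Finset

lemma col_strict_gen {μ : ℕ → ℕ} {T : ℕ → ℕ → ℕ} (hmono : ∀ i, μ (i+1) ≤ μ i)
    (hcol : ∀ i j, j < μ (i+1) → T i j < T (i+1) j) :
    ∀ i1 i2 j, i1 < i2 → j < μ i2 → T i1 j < T i2 j := by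
  intro i1 i2 j h hj
  induction i2 with
  | zero => omega
  | succ i2 ih =>
    rcases Nat.lt_or_ge i1 i2 with h2 | h2
    · exact lt_trans (ih h2 (lt_of_lt_of_le hj (hmono i2))) (hcol i2 j hj)
    · have : i1 = i2 := by omega
      subst this
      exact hcol i1 j hj

/-- The number of cells with entry in a given set `Sn` is at most the number of cells in the
first `Sn.card` rows. -/
lemma card_entry_mem_le {μ : YoungDiagram} (T : SemistandardYoungTableau μ) (Sn : Finset ℕ) :
    ((μ.cells).filter (fun c => T c.1 c.2 ∈ Sn)).card
      ≤ ((μ.cells).filter (fun c => c.1 < Sn.card)).card := by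
  apply Finset.card_le_card_of_injOn
    (fun c => (((Finset.range c.1).filter (fun r => T r c.2 ∈ Sn)).card, c.2))
  · -- maps to
    intro c hc
    rw [Finset.mem_coe, Finset.mem_filter] at hc ⊢
    obtain ⟨hcell, hmem⟩ := hc
    rw [YoungDiagram.mem_cells] at hcell
    have hcc : ((c.1 : ℕ), c.2) ∈ μ := by rwa [Prod.mk.eta]
    set F := (Finset.range c.1).filter (fun r => T r c.2 ∈ Sn) with hF
    have hFsub : F ⊆ Finset.range c.1 := Finset.filter_subset _ _
    have hle : F.card ≤ c.1 := le_trans (Finset.card_le_card hFsub) (by rw [Finset.card_range])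
    constructor
    · rw [YoungDiagram.mem_cells]
      exact μ.up_left_mem hle le_rfl hcc
    · -- F.card < Sn.card
      have hnotmem : c.1 ∉ F := fun hx => absurd (Finset.mem_range.mp (hFsub hx)) (lt_irrefl _)
      have hins : (insert c.1 F).card = F.card + 1 := Finset.card_insert_of_notMem hnotmem
      have hinj : Set.InjOn (fun r => T r c.2) (insert c.1 F : Finset ℕ) := by
        intro r1 h1 r2 h2 he
        simp only at he
        by_contra hne
        have hmax : ∀ r ∈ insert c.1 F, r ≤ c.1 := by
          intro r hr
          rcases Finset.mem_insert.mp hr with h | h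
          · omega
          · exact le_of_lt (Finset.mem_range.mp (hFsub h))
        rcases Nat.lt_or_ge r1 r2 with hlt | hge
        · have : T r1 c.2 < T r2 c.2 :=
            T.col_strict' hlt (μ.up_left_mem (hmax r2 h2) le_rfl hcc)
          omega
        · have hlt2 : r2 < r1 := by omega
          have : T r2 c.2 < T r1 c.2 :=
            T.col_strict' hlt2 (μ.up_left_mem (hmax r1 h1) le_rfl hcc)
          omega
      have hmapsto : ∀ r ∈ insert c.1 F, T r c.2 ∈ Sn := by
        intro r hr
        rcases Finset.mem_insert.mp hr with h | h
        · rw [h]; exact hmem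
        · exact (Finset.mem_filter.mp h).2
      have := Finset.card_le_card_of_injOn (fun r => T r c.2) hmapsto hinj
      show F.card < Sn.card; omega
  · -- injective
    intro c1 hc1 c2 hc2 heq
    rw [Finset.mem_coe, Finset.mem_filter] at hc1 hc2
    obtain ⟨he1, he2⟩ := Prod.mk.injEq _ _ _ _ |>.mp heq
    have hcol12 : c1.2 = c2.2 := he2
    by_contra hne
    have hne1 : c1.1 ≠ c2.1 := by
      intro h
      exact hne (Prod.ext h hcol12)
    -- wlog c1.1 < c2.1
    have key : ∀ d1 d2 : ℕ × ℕ, d1 ∈ μ.cells → T d1.1 d1.2 ∈ Sn → d2.2 = d1.2 → d1.1 < d2.1 →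
        ((Finset.range d1.1).filter (fun r => T r d1.2 ∈ Sn)).card
          < ((Finset.range d2.1).filter (fun r => T r d2.2 ∈ Sn)).card := by
      intro d1 d2 hd1 hmem1 hcol hlt
      have hsub : insert d1.1 ((Finset.range d1.1).filter (fun r => T r d1.2 ∈ Sn))
          ⊆ (Finset.range d2.1).filter (fun r => T r d2.2 ∈ Sn) := by
        intro r hr
        rcases Finset.mem_insert.mp hr with h | h
        · rw [h]
          rw [Finset.mem_filter, Finset.mem_range, hcol]
          exact ⟨hlt, hmem1⟩
        · rw [Finset.mem_filter, Finset.mem_range] at h ⊢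
          exact ⟨by omega, by rw [hcol]; exact h.2⟩
      have hni : d1.1 ∉ (Finset.range d1.1).filter (fun r => T r d1.2 ∈ Sn) := by
        simp
      have := Finset.card_le_card hsub
      rw [Finset.card_insert_of_notMem hni] at this
      omega
    rcases Nat.lt_or_ge c1.1 c2.1 with hlt | hge
    · have := key c1 c2 hc1.1 hc1.2 hcol12.symm hlt
      omega
    · have hlt2 : c2.1 < c1.1 := by omega
      have := key c2 c1 hc2.1 hc2.2 hcol12 hlt2
      omega

lemma sum_content_eq {μ : YoungDiagram} (T : SemistandardYoungTableau μ) {m : ℕ}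
    (S : Finset (Fin m)) :
    ∑ k ∈ S, content μ T (k : ℕ)
      = ((μ.cells).filter (fun c => T c.1 c.2 ∈ S.image (fun k : Fin m => (k : ℕ)))).card := by
  rw [show ((μ.cells).filter (fun c => T c.1 c.2 ∈ S.image (fun k : Fin m => (k : ℕ))))
    = S.biUnion (fun k => (μ.cells).filter (fun c => T c.1 c.2 = (k : ℕ))) by
      ext c
      simp only [Finset.mem_filter, Finset.mem_biUnion, Finset.mem_image]
      constructor
      · rintro ⟨hc, k, hk, he⟩
        exact ⟨k, hk, hc, he.symm⟩
      · rintro ⟨k, hk, hc, he⟩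
        exact ⟨hc, k, hk, he.symm⟩]
  rw [Finset.card_biUnion]
  · rfl
  · intro a _ b _ hab
    simp only [Finset.disjoint_left, Finset.mem_filter]
    rintro c ⟨-, h1⟩ ⟨-, h2⟩
    exact hab (Fin.val_injective (h1.symm.trans h2))

/-- Key inequality: sum of contents over a set of letters is bounded by the partial sum of
the shape. -/
lemma key_ineq {m : ℕ} (lam : Fin m → ℕ) (h : Antitone lam)
    (T : SemistandardYoungTableau (diagramOf lam h)) (S : Finset (Fin m)) :
    ∑ k ∈ S, content (diagramOf lam h) T (k : ℕ) ≤ ∑ i ∈ Finset.range S.card, extFun lam i := by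
  rw [sum_content_eq]
  calc _ ≤ (((diagramOf lam h).cells).filter
        (fun c => c.1 < (S.image (fun k : Fin m => (k : ℕ))).card)).card :=
        card_entry_mem_le T _
    _ = (((diagramOf lam h).cells).filter (fun c => c.1 < S.card)).card := by
        rw [Finset.card_image_of_injective _ Fin.val_injective]
    _ = ∑ i ∈ Finset.range m, ((Finset.range (extFun lam i)).filter (fun _ => i < S.card)).card :=
        filter_card_diagramOf lam h (fun c => c.1 < S.card)
    _ ≤ ∑ i ∈ Finset.range S.card, extFun lam i := by
        rw [← Finset.sum_filter_add_sum_filter_not (Finset.range m) (fun i => i < S.card)]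
        have h1 : ∀ i ∈ (Finset.range m).filter (fun i => ¬ i < S.card),
            ((Finset.range (extFun lam i)).filter (fun _ => i < S.card)).card = 0 := by
          intro i hi
          rw [Finset.mem_filter] at hi
          rw [Finset.filter_false_of_mem (fun _ _ => hi.2)]
          rfl
        rw [Finset.sum_congr rfl h1, Finset.sum_const, smul_zero, add_zero]
        have h2 : ∀ i ∈ (Finset.range m).filter (fun i => i < S.card),
            ((Finset.range (extFun lam i)).filter (fun _ => i < S.card)).card = extFun lam i := by
          intro i hi
          rw [Finset.mem_filter] at hi
          rw [Finset.filter_true_of_mem (fun _ _ => hi.2), Finset.card_range]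
        rw [Finset.sum_congr rfl h2]
        apply Finset.sum_le_sum_of_subset
        intro x hx
        rw [Finset.mem_filter] at hx
        rw [Finset.mem_range]
        exact hx.2

end Aux2

section Aux3

open Finset

/-- The canonical (highest weight) tableau of shape `diagramOf lam h`: row `i` is filled
with `i`s. -/
def canonicalT {m : ℕ} (lam : Fin m → ℕ) (h : Antitone lam) :
    SemistandardYoungTableau (diagramOf lam h) where
  entry := fun i j => if j < extFun lam i then i else 0
  row_weak' := by
    intro i j1 j2 hj hm
    rw [mem_diagramOf] at hm
    rw [if_pos hm, if_pos (by omega)]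
  col_strict' := by
    intro i1 i2 j hi hm
    rw [mem_diagramOf] at hm
    have h2 : extFun lam i2 ≤ extFun lam i1 := extFun_anti h i1 i2 (le_of_lt hi)
    rw [if_pos hm, if_pos (by omega)]
    exact hi
  zeros' := by
    intro i j hm
    rw [mem_diagramOf] at hm
    rw [if_neg hm]

lemma canonicalT_lt {m : ℕ} (lam : Fin m → ℕ) (h : Antitone lam) :
    ∀ i j : ℕ, (i, j) ∈ diagramOf lam h → canonicalT lam h i j < m := by
  intro i j hm
  rw [mem_diagramOf] at hm
  have him : i < m := by
    by_contra hc
    rw [extFun_ge lam hc] at hm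
    omega
  show (if j < extFun lam i then i else 0) < m
  rw [if_pos hm]
  exact him

lemma canonicalT_content {m : ℕ} (lam : Fin m → ℕ) (h : Antitone lam) (k : Fin m) :
    content (diagramOf lam h) (canonicalT lam h) (k : ℕ) = lam k := by
  rw [content_diagramOf]
  have h1 : ∀ i ∈ Finset.range m,
      ((Finset.range (extFun lam i)).filter (fun j => canonicalT lam h i j = (k : ℕ))).card
        = if i = (k : ℕ) then extFun lam i else 0 := by
    intro i hi
    by_cases hik : i = (k : ℕ)
    · rw [if_pos hik]
      rw [Finset.filter_true_of_mem, Finset.card_range]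
      intro j hj
      rw [Finset.mem_range] at hj
      show (if j < extFun lam i then i else 0) = (k : ℕ)
      rw [if_pos hj]; exact hik
    · rw [if_neg hik]
      rw [Finset.filter_false_of_mem, Finset.card_empty]
      intro j hj
      rw [Finset.mem_range] at hj
      show ¬ (if j < extFun lam i then i else 0) = (k : ℕ)
      rw [if_pos hj]; exact hik
  rw [Finset.sum_congr rfl h1, Finset.sum_ite_eq' (Finset.range m) ((k : ℕ)) (fun i => extFun lam i)]
  rw [if_pos (Finset.mem_range.mpr k.isLt), extFun_lt lam k.isLt, Fin.eta]

/-- Finiteness of the set of bounded-entry SSYT counted by `schurCoeff`. -/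
lemma finite_schur_set (m : ℕ) (μ : YoungDiagram) (γ : Fin m → ℕ) :
    Finite {T : SemistandardYoungTableau μ // (∀ i j : ℕ, (i, j) ∈ μ → T i j < m) ∧
      ∀ k : Fin m, content μ T (k : ℕ) = γ k} := by
  let f : {T : SemistandardYoungTableau μ // (∀ i j : ℕ, (i, j) ∈ μ → T i j < m) ∧
      ∀ k : Fin m, content μ T (k : ℕ) = γ k} → (μ.cells → Fin m) :=
    fun T c => ⟨T.1 c.1.1 c.1.2, T.2.1 c.1.1 c.1.2 (by
      rw [← YoungDiagram.mem_cells, Prod.mk.eta]; exact c.2)⟩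
  have hf : Function.Injective f := by
    intro T1 T2 he
    apply Subtype.ext
    apply SemistandardYoungTableau.ext
    intro i j
    by_cases hm : (i, j) ∈ μ
    · have h2 := congrFun he ⟨(i, j), (YoungDiagram.mem_cells _).mpr hm⟩
      have := congrArg Fin.val h2
      simpa [f] using this
    · show T1.1.entry i j = T2.1.entry i j
      rw [T1.1.zeros' hm, T2.1.zeros' hm]
  exact Finite.of_injective f hf

end Aux3

section Aux4

open Finset

lemma sum_ext_eq {m : ℕ} (lam : Fin m → ℕ) :
    ∑ i ∈ Finset.range m, extFun lam i = ∑ k : Fin m, lam k := by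
  rw [← Fin.sum_univ_eq_sum_range (fun t => extFun lam t) m]
  exact Finset.sum_congr rfl fun k _ => by rw [extFun_lt lam k.isLt, Fin.eta]

lemma sum_filter_le_eq {m : ℕ} (lam : Fin m → ℕ) (j : Fin m) :
    ∑ i ∈ Finset.univ.filter (· ≤ j), lam i = ∑ i ∈ Finset.range ((j : ℕ)+1), extFun lam i := by
  have h1 : (Finset.range m).filter (fun i => i < (j : ℕ)+1) = Finset.range ((j : ℕ)+1) := by
    ext i
    simp only [Finset.mem_filter, Finset.mem_range]
    have := j.isLt
    omega
  have h2 : ∑ i ∈ Finset.range ((j : ℕ)+1), extFun lam i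
      = ∑ k : Fin m, if (k : ℕ) < (j : ℕ)+1 then lam k else 0 := by
    rw [← h1, Finset.sum_filter, ← Fin.sum_univ_eq_sum_range
      (fun i => if i < (j : ℕ)+1 then extFun lam i else 0) m]
    exact Finset.sum_congr rfl fun k _ => by rw [extFun_lt lam k.isLt, Fin.eta]
  rw [h2, Finset.sum_filter]
  refine Finset.sum_congr rfl fun k _ => ?_
  by_cases hk : k ≤ j
  · rw [if_pos hk, if_pos (by rw [Fin.le_def] at hk; omega)]
  · rw [if_neg hk, if_neg (by rw [Fin.le_def, not_le] at hk; omega)]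

lemma card_filter_le {m : ℕ} (j : Fin m) :
    (Finset.univ.filter (fun i : Fin m => i ≤ j)).card = (j : ℕ)+1 := by
  rw [Finset.card_eq_sum_ones, sum_filter_le_eq (fun _ => 1) j]
  have h1 : ∀ i ∈ Finset.range ((j : ℕ)+1), extFun (fun _ : Fin m => 1) i = 1 := by
    intro i hi
    rw [Finset.mem_range] at hi
    have := j.isLt
    rw [extFun_lt _ (by omega : i < m)]
  rw [Finset.sum_congr rfl h1, Finset.sum_const, smul_eq_mul, mul_one, Finset.card_range]

lemma schur_ne_zero_iff (m : ℕ) (μ : YoungDiagram) (γ : Fin m → ℕ) :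
    schurCoeff m μ γ ≠ 0 ↔ Nonempty {T : SemistandardYoungTableau μ //
      (∀ i j : ℕ, (i, j) ∈ μ → T i j < m) ∧ ∀ k : Fin m, content μ T (k : ℕ) = γ k} := by
  rw [schurCoeff, Nat.card_ne_zero]
  exact ⟨fun h => h.1, fun h => ⟨h, finite_schur_set m μ γ⟩⟩

lemma sum_content_univ {m : ℕ} {μ : YoungDiagram} (T : SemistandardYoungTableau μ)
    (hb : ∀ i j : ℕ, (i, j) ∈ μ → T i j < m) :
    ∑ k : Fin m, content μ T (k : ℕ) = μ.cells.card := by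
  rw [sum_content_eq T Finset.univ]
  congr 1
  apply Finset.filter_true_of_mem
  intro c hc
  rw [Finset.mem_image]
  have hcm : T c.1 c.2 < m := hb c.1 c.2 (by
    rw [← YoungDiagram.mem_cells, Prod.mk.eta]; exact hc)
  exact ⟨⟨T c.1 c.2, hcm⟩, Finset.mem_univ _, rfl⟩

lemma convex_halfspace_coords (m : ℕ) (A : Finset (Fin m)) (C : ℝ) :
    Convex ℝ {x : Fin m → ℝ | ∑ i ∈ A, x i ≤ C} := by
  apply convex_halfSpace_le
  constructor
  · intro x y
    simp [Finset.sum_add_distrib]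
  · intro c x
    simp [Finset.mul_sum]

lemma dominates_ext {m : ℕ} {a b : Fin m → ℕ} (hdom : Dominates a b)
    (hsize : ∑ k, a k = ∑ k, b k) :
    ∀ t : ℕ, ∑ i ∈ Finset.range t, extFun a i ≤ ∑ i ∈ Finset.range t, extFun b i := by
  intro t
  rcases Nat.lt_or_ge t (m+1) with ht | ht
  · rcases Nat.eq_zero_or_pos t with h0 | h0
    · simp [h0]
    · have hj : t - 1 < m := by omega
      have hteq : t = ((⟨t-1, hj⟩ : Fin m) : ℕ) + 1 := by simp; omega
      rw [hteq, ← sum_filter_le_eq a ⟨t-1, hj⟩, ← sum_filter_le_eq b ⟨t-1, hj⟩]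
      exact hdom ⟨t-1, hj⟩
  · have ha : ∑ i ∈ Finset.range t, extFun a i = ∑ i ∈ Finset.range m, extFun a i := by
      symm
      apply Finset.sum_subset (Finset.range_subset_range.mpr (by omega))
      intro x _ hx
      rw [Finset.mem_range] at hx
      exact extFun_ge a hx
    have hb : ∑ i ∈ Finset.range t, extFun b i = ∑ i ∈ Finset.range m, extFun b i := by
      symm
      apply Finset.sum_subset (Finset.range_subset_range.mpr (by omega))
      intro x _ hx
      rw [Finset.mem_range] at hx
      exact extFun_ge b hx
    rw [ha, hb, sum_ext_eq, sum_ext_eq, hsize]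

end Aux4

section Main

open Finset

lemma supp_subset_halfspace {m : ℕ} (β : Fin m → ℕ) (hβ : Antitone β) (j : Fin m) :
    Supp (schurR m (diagramOf β hβ)) ⊆
      {x : Fin m → ℝ | ∑ i ∈ Finset.univ.filter (· ≤ j), x i
        ≤ ((∑ i ∈ Finset.univ.filter (· ≤ j), β i : ℕ) : ℝ)} := by
  rintro x ⟨γ, hγ, rfl⟩
  have hne : schurCoeff m (diagramOf β hβ) γ ≠ 0 := by
    intro h
    exact hγ (by simp [schurR, h])
  obtain ⟨⟨T, hTb, hTc⟩⟩ := (schur_ne_zero_iff _ _ _).mp hne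
  have h1 := key_ineq β hβ T (Finset.univ.filter (· ≤ j))
  rw [card_filter_le j] at h1
  rw [Finset.sum_congr rfl (fun k _ => hTc k)] at h1
  rw [← sum_filter_le_eq β j] at h1
  show ∑ i ∈ Finset.univ.filter (· ≤ j), ((γ i : ℕ) : ℝ) ≤ _
  exact_mod_cast h1

lemma supp_mono {m : ℕ} {α β : Fin m → ℕ} (hα : Antitone α) (hβ : Antitone β)
    (hsize : ∑ k, α k = ∑ k, β k) (hdom : Dominates α β) :
    Supp (schurR m (diagramOf α hα)) ⊆ Supp (schurR m (diagramOf β hβ)) := by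
  rintro x ⟨γ, hγ, rfl⟩
  refine ⟨γ, ?_, rfl⟩
  have hneα : schurCoeff m (diagramOf α hα) γ ≠ 0 := by
    intro h
    exact hγ (by simp [schurR, h])
  obtain ⟨⟨T, hTb, hTc⟩⟩ := (schur_ne_zero_iff _ _ _).mp hneα
  have hmono : ∀ i, extFun β (i+1) ≤ extFun β i := fun i => extFun_anti hβ i (i+1) (by omega)
  have hμfin : ∀ i, m ≤ i → extFun β i = 0 := fun i hi => extFun_ge β (by omega)
  have hγfin : ∀ k, m ≤ k → extFun γ k = 0 := fun k hk => extFun_ge γ (by omega)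
  have hdomS : ∀ S : Finset ℕ, ∑ k ∈ S, extFun γ k ≤ ∑ i ∈ Finset.range S.card, extFun β i := by
    intro S
    set Sf : Finset (Fin m) := Finset.univ.filter (fun k : Fin m => (k : ℕ) ∈ S) with hSf
    have himg : Sf.image (fun k : Fin m => (k : ℕ)) = S.filter (· < m) := by
      ext t
      simp only [hSf, Finset.mem_image, Finset.mem_filter, Finset.mem_univ, true_and]
      constructor
      · rintro ⟨k, hk, rfl⟩
        exact ⟨hk, k.isLt⟩
      · rintro ⟨ht, htm⟩
        exact ⟨⟨t, htm⟩, ht, rfl⟩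
    have e1 : ∑ k ∈ S, extFun γ k = ∑ k ∈ S.filter (· < m), extFun γ k := by
      symm
      apply Finset.sum_filter_of_ne
      intro k _ hne
      by_contra hc
      exact hne (extFun_ge γ hc)
    have e2 : ∑ k ∈ S.filter (· < m), extFun γ k = ∑ k ∈ Sf, γ k := by
      rw [← himg, Finset.sum_image (fun a _ b _ hab => Fin.val_injective hab)]
      exact Finset.sum_congr rfl fun k _ => by rw [extFun_lt γ k.isLt, Fin.eta]
    have hcard : Sf.card ≤ S.card := by
      rw [← Finset.card_image_of_injective Sf Fin.val_injective, himg]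
      exact le_trans (Finset.card_filter_le _ _) le_rfl
    have e3 : ∑ k ∈ Sf, γ k ≤ ∑ i ∈ Finset.range Sf.card, extFun α i := by
      have h := key_ineq α hα T Sf
      rwa [Finset.sum_congr rfl (fun k _ => hTc k)] at h
    calc ∑ k ∈ S, extFun γ k = ∑ k ∈ Sf, γ k := by rw [e1, e2]
      _ ≤ ∑ i ∈ Finset.range Sf.card, extFun α i := e3
      _ ≤ ∑ i ∈ Finset.range Sf.card, extFun β i := dominates_ext hdom hsize _
      _ ≤ ∑ i ∈ Finset.range S.card, extFun β i := by
          apply Finset.sum_le_sum_of_subset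
          exact Finset.range_subset_range.mpr hcard
  have hsum : ∑ k ∈ Finset.range m, extFun γ k = ∑ i ∈ Finset.range m, extFun β i := by
    rw [sum_ext_eq γ, sum_ext_eq β]
    have h6 : ∑ k : Fin m, γ k = (diagramOf α hα).cells.card := by
      rw [← sum_content_univ T hTb]
      exact Finset.sum_congr rfl fun k _ => (hTc k).symm
    rw [h6, card_diagramOf α hα, sum_ext_eq α, hsize]
  obtain ⟨T', hrow, hcol, hzero, hbound, hcont⟩ :=
    raw_exists m (extFun β) (extFun γ) hmono hμfin hγfin hdomS hsum
  let T2 : SemistandardYoungTableau (diagramOf β hβ) :=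
    { entry := T'
      row_weak' := fun {i j1 j2} h12 hm => hrow i j1 j2 (le_of_lt h12) (mem_diagramOf.mp hm)
      col_strict' := fun {i1 i2 j} h12 hm =>
        col_strict_gen hmono hcol i1 i2 j h12 (mem_diagramOf.mp hm)
      zeros' := fun {i j} hm => hzero i j (by
        have := (mem_diagramOf (lam := β) (h := hβ) (i := i) (j := j)).not.mp hm
        omega) }
  have hT2 : ∀ i j : ℕ, (i, j) ∈ diagramOf β hβ → T2 i j < m :=
    fun i j hm => hbound i j (mem_diagramOf.mp hm)
  have hT2c : ∀ k : Fin m, content (diagramOf β hβ) T2 (k : ℕ) = γ k := by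
    intro k
    rw [content_diagramOf]
    have hcoe : (T2 : ℕ → ℕ → ℕ) = T' := rfl
    rw [show (∑ i ∈ Finset.range m,
        ((Finset.range (extFun β i)).filter (fun j => T2 i j = (k : ℕ))).card)
      = ∑ i ∈ Finset.range m,
        ((Finset.range (extFun β i)).filter (fun j => T' i j = (k : ℕ))).card by rw [hcoe]]
    rw [← hcont (k : ℕ), extFun_lt γ k.isLt, Fin.eta]
  have hne : schurCoeff m (diagramOf β hβ) γ ≠ 0 :=
    (schur_ne_zero_iff _ _ _).mpr ⟨⟨T2, hT2, hT2c⟩⟩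
  simp [schurR, hne]

end Main

/-- **Rado's theorem.** For partitions `α, β` of the same size with at most `m` parts,
`Newton(s_α) ⊆ Newton(s_β)` iff `β` dominates `α`. -/
theorem newton_schur_subset_iff_dominates (m : ℕ) (α β : Fin m → ℕ)
    (hα : Antitone α) (hβ : Antitone β) (hsize : ∑ k, α k = ∑ k, β k) :
    NewtonP (schurR m (diagramOf α hα)) ⊆ NewtonP (schurR m (diagramOf β hβ)) ↔
      Dominates α β := by
  constructor
  · intro hsub j
    have hαne : schurCoeff m (diagramOf α hα) α ≠ 0 :=
      (schur_ne_zero_iff _ _ _).mpr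
        ⟨⟨canonicalT α hα, canonicalT_lt α hα, fun k => canonicalT_content α hα k⟩⟩
    have hαmem : (fun i => ((α i : ℕ) : ℝ)) ∈ Supp (schurR m (diagramOf α hα)) :=
      ⟨α, by simp [schurR, hαne], rfl⟩
    have h2 : (fun i => ((α i : ℕ) : ℝ)) ∈ NewtonP (schurR m (diagramOf β hβ)) :=
      hsub (subset_convexHull ℝ _ hαmem)
    have h3 := convexHull_min (supp_subset_halfspace β hβ j)
      (convex_halfspace_coords m _ _) h2
    simp only [Set.mem_setOf_eq] at h3
    exact_mod_cast h3
  · intro hdom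
    exact convexHull_mono (supp_mono hα hβ hsize hdom)
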